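/- Let α ≥ 2 and L ≥ 1 be natural numbers with ν = ν₂(α) and suppose α + 2^ν ≡ 2^{L-1} (mod 2^L) with ν + 1 ≤ L - 1. Then (α - 1 + 2^{L-1}) ⊇_2 2^{L-1} holds, but (α + 2^L) ⊇_2 2^{L-1} fails. -/
import Mathlib


/-- `a ⊇_2 b`: every binary digit of `b` is `0` or equals the corresponding digit of `a`. -/
def Sup2 (a b : ℕ) : Prop :=
  ∀ i, b.testBit i = false ∨ b.testBit i = a.testBit i

theorem stmt_10 (α L : ℕ) (hα : 2 ≤ α)
    (hνL : padicValNat 2 α + 1 < L)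
    (hmod : (α + 2 ^ padicValNat 2 α) % 2 ^ L = 2 ^ (L - 1) % 2 ^ L) :
    Sup2 (α - 1 + 2 ^ (L - 1)) (2 ^ (L - 1)) ∧
      ¬ Sup2 (α + 2 ^ L) (2 ^ (L - 1)) := by
  set ν := padicValNat 2 α with hν
  have hαpos : 0 < α := by omega
  have hdvd : 2 ^ ν ∣ α := pow_padicValNat_dvd
  have hνle : 2 ^ ν ≤ α := Nat.le_of_dvd hαpos hdvd
  have hLL : 2 ^ L = 2 * 2 ^ (L - 1) := by
    rw [← pow_succ']
    congr 1
    omega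
  have h2ν : 2 * 2 ^ ν ≤ 2 ^ (L - 1) := by
    calc 2 * 2 ^ ν = 2 ^ (ν + 1) := (pow_succ' 2 ν).symm
    _ ≤ 2 ^ (L - 1) := Nat.pow_le_pow_right (by norm_num) (by omega)
  have h1 : 2 ^ (L - 1) % 2 ^ L = 2 ^ (L - 1) := Nat.mod_eq_of_lt (by omega)
  obtain ⟨k, hk⟩ : ∃ k, α + 2 ^ ν = 2 ^ L * k + 2 ^ (L - 1) := by
    refine ⟨(α + 2 ^ ν) / 2 ^ L, ?_⟩
    have hd := Nat.div_add_mod (α + 2 ^ ν) (2 ^ L)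
    rw [hmod, h1] at hd
    omega
  -- key bit computations
  have hbit1 : (α - 1 + 2 ^ (L - 1)).testBit (L - 1) = true := by
    have hm : 2 ^ (L - 1) * (2 * k + 1) = 2 ^ L * k + 2 ^ (L - 1) := by rw [hLL]; ring
    have he : α - 1 + 2 ^ (L - 1) = 2 ^ (L - 1) * (2 * k + 1) + (2 ^ (L - 1) - 2 ^ ν - 1) := by
      omega
    rw [Nat.testBit_eq_decide_div_mod_eq, he]
    rw [Nat.mul_add_div (by positivity), Nat.div_eq_of_lt (by omega)]
    simp [Nat.add_mul_mod_self_left, Nat.mul_add_mod]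
  have hbit2 : (α + 2 ^ L).testBit (L - 1) = false := by
    have hm : 2 ^ (L - 1) * (2 * k + 2) = 2 ^ L * k + 2 ^ L := by rw [hLL]; ring
    have he : α + 2 ^ L = 2 ^ (L - 1) * (2 * k + 2) + (2 ^ (L - 1) - 2 ^ ν) := by
      omega
    rw [Nat.testBit_eq_decide_div_mod_eq, he]
    rw [Nat.mul_add_div (by positivity), Nat.div_eq_of_lt (by omega)]
    simp [Nat.mul_add_mod]
  constructor
  · intro i
    rcases eq_or_ne (L - 1) i with h | h
    · right
      rw [← h, hbit1, Nat.testBit_two_pow_self]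
    · left
      exact Nat.testBit_two_pow_of_ne h
  · intro hsup
    rcases hsup (L - 1) with h | h
    · rw [Nat.testBit_two_pow_self] at h
      exact absurd h (by simp)
    · rw [Nat.testBit_two_pow_self, hbit2] at h
      exact absurd h (by simp)
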